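/- If τ : Ω → Ω is a nonsingular surjective measurable transformation such that μ(τ^{-1}(E)) ≥ μ(E) for all E ∈ Σ, then the ascent of the composition operator C_τ on the Orlicz space L^φ(Ω) equals 1. -/

import Mathlib

open MeasureTheory

/-- An Orlicz function: continuous, convex, nondecreasing on `[0,∞)`, vanishing exactly at `0`,
with `φ(x)/x → 0` as `x → 0⁺` and `φ(x)/x → ∞` as `x → ∞`. -/
def IsOrliczFn (φ : ℝ → ℝ) : Prop :=
  ContinuousOn φ (Set.Ici 0) ∧ ConvexOn ℝ (Set.Ici 0) φ ∧ MonotoneOn φ (Set.Ici 0) ∧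
  (∀ x : ℝ, 0 ≤ x → (φ x = 0 ↔ x = 0)) ∧
  Filter.Tendsto (fun x => φ x / x) (nhdsWithin 0 (Set.Ioi 0)) (nhds 0) ∧
  Filter.Tendsto (fun x => φ x / x) Filter.atTop Filter.atTop

/-- Membership in the Orlicz space `L^φ(Ω)`: `∫ φ(α|f|) dμ < ∞` for some `α > 0`. -/
def MemOrlicz (φ : ℝ → ℝ) {Ω : Type*} [MeasurableSpace Ω] (μ : Measure Ω) (f : Ω → ℝ) : Prop :=
  Measurable f ∧ ∃ α : ℝ, 0 < α ∧ ∫⁻ x, ENNReal.ofReal (φ (α * |f x|)) ∂μ < ⊤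

/-- The Luxemburg norm on the Orlicz space `L^φ(Ω)`. -/
noncomputable def luxNorm (φ : ℝ → ℝ) {Ω : Type*} [MeasurableSpace Ω] (μ : Measure Ω)
    (f : Ω → ℝ) : ℝ :=
  sInf {k : ℝ | 0 < k ∧ ∫⁻ x, ENNReal.ofReal (φ (|f x| / k)) ∂μ ≤ 1}

/-- `τ` induces a bounded composition operator `C_τ f = f ∘ τ` on `L^φ(Ω)`. -/
def BoundedCompOp (φ : ℝ → ℝ) {Ω : Type*} [MeasurableSpace Ω] (μ : Measure Ω)
    (τ : Ω → Ω) : Prop :=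
  (∀ f : Ω → ℝ, MemOrlicz φ μ f → MemOrlicz φ μ (f ∘ τ)) ∧
  ∃ C : ℝ, 0 ≤ C ∧ ∀ f : Ω → ℝ, MemOrlicz φ μ f →
    luxNorm φ μ (f ∘ τ) ≤ C * luxNorm φ μ f

/-- The kernel of `C_τ ^ k` acting on `L^φ(Ω)` (at the level of a.e. equality). -/
def kerPow (φ : ℝ → ℝ) {Ω : Type*} [MeasurableSpace Ω] (μ : Measure Ω) (τ : Ω → Ω)
    (k : ℕ) : Set (Ω → ℝ) :=
  {f | MemOrlicz φ μ f ∧ (f ∘ τ^[k]) =ᵐ[μ] (fun _ => 0)}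

/-- The range of `C_τ ^ k` acting on `L^φ(Ω)`. -/
def ranPow (φ : ℝ → ℝ) {Ω : Type*} [MeasurableSpace Ω] (μ : Measure Ω) (τ : Ω → Ω)
    (k : ℕ) : Set (Ω → ℝ) :=
  (fun f : Ω → ℝ => f ∘ τ^[k]) '' {f | MemOrlicz φ μ f}

/-- If `τ` is a nonsingular surjective measurable transformation with `μ(τ⁻¹ E) ≥ μ(E)`
for all `E`, then the ascent of `C_τ` on the Orlicz space `L^φ(Ω)` is `1`. -/
theorem ascent_one_of_expanding {Ω : Type*} [MeasurableSpace Ω] (μ : Measure Ω)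
    [SigmaFinite μ] (hc : μ.IsComplete) (τ : Ω → Ω) (hτ : Measurable τ)
    (hsurj : Function.Surjective τ)
    (hns : ∀ A : Set Ω, MeasurableSet A → μ A = 0 → μ (τ ⁻¹' A) = 0)
    (hge : ∀ E : Set Ω, MeasurableSet E → μ E ≤ μ (τ ⁻¹' E))
    (φ : ℝ → ℝ) (hφ : IsOrliczFn φ) (hb : BoundedCompOp φ μ τ) :
    kerPow φ μ τ 1 = kerPow φ μ τ 2 := by
  ext f
  simp only [kerPow, Set.mem_setOf_eq, Function.iterate_one]
  constructor
  · rintro ⟨hf, h1⟩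
    refine ⟨hf, ?_⟩
    have hmeas : Measurable f := hf.1
    have hA : MeasurableSet {x | f (τ x) ≠ 0} :=
      ((hmeas.comp hτ) (measurableSet_singleton (0:ℝ)).compl)
    have h0 : μ {x | f (τ x) ≠ 0} = 0 := by
      have := h1
      rw [Filter.EventuallyEq, Filter.eventually_iff, mem_ae_iff] at this
      convert this using 2
      rfl
    have := hns _ hA h0
    rw [Filter.EventuallyEq, Filter.eventually_iff, mem_ae_iff]
    convert this using 2
    rfl
  · rintro ⟨hf, h2⟩
    refine ⟨hf, ?_⟩
    have hmeas : Measurable f := hf.1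
    have hB : MeasurableSet (τ ⁻¹' (f ⁻¹' {(0:ℝ)}ᶜ)) :=
      hτ (hmeas (measurableSet_singleton (0:ℝ)).compl)
    have h0 : μ (τ ⁻¹' (τ ⁻¹' (f ⁻¹' {(0:ℝ)}ᶜ))) = 0 := by
      rw [Filter.EventuallyEq, Filter.eventually_iff, mem_ae_iff] at h2
      convert h2 using 2
      rfl
    have hle := hge _ hB
    have : μ (τ ⁻¹' (f ⁻¹' {(0:ℝ)}ᶜ)) = 0 := le_antisymm (hle.trans h0.le) zero_le
    rw [Filter.EventuallyEq, Filter.eventually_iff, mem_ae_iff]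
    convert this using 2
    rfl
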